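/- (Jensen) Let C_i be a linear code of length ℓ over E_i for each i in a subset I of {1,…,s}, and let ⟨θ_i⟩ be the minimal cyclic code of length m over F_q with check polynomial f_i(x), identified with E_i via the maps φ_i, ψ_i. Then C = ⊕_{i∈I} ⟨θ_i⟩ □ C_i (concatenation applying ψ_i symbolwise) is a q-ary QC code of length mℓ and index dividing ℓ. Conversely, every QC code of length mℓ and index ℓ arises in this way. -/

import Mathlib

set_option maxHeartbeats 1000000
set_option linter.unusedSectionVars false

open Polynomial

/-- The minimal cyclic code of length `m` over `F` with check polynomial `f`:
length-`m` vectors whose polynomial, multiplied by `f`, vanishes mod `x^m − 1`. -/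
def minimalCyclicCode (F : Type*) [Field F] (m : ℕ) (f : Polynomial F) :
    Set (Fin m → F) :=
  {v | (X ^ m - C 1) ∣ (∑ k : Fin m, C (v k) * X ^ (k : ℕ)) * f}

/-- The concatenated code `⊕_i ⟨θ_i⟩ □ C_i`, where `ψ i` identifies `E_i` with `⟨θ_i⟩`
and is applied symbolwise to the outer codewords. -/
def concatCode {F : Type*} [Field F] {m ℓ s : ℕ} {f : Fin s → Polynomial F}
    (ψ : ∀ i, AdjoinRoot (f i) →ₗ[F] (Fin m → F))
    (Cs : ∀ i, Submodule (AdjoinRoot (f i)) (Fin ℓ → AdjoinRoot (f i))) :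
    Set (Fin m → Fin ℓ → F) :=
  {c | ∃ lam : ∀ i, Fin ℓ → AdjoinRoot (f i),
    (∀ i, lam i ∈ Cs i) ∧ ∀ k j, c k j = ∑ i, ψ i (lam i j) k}

namespace Stmt6Aux

open scoped Fin.NatCast Fin.CommRing

variable {F : Type*} [Field F] {m : ℕ} [NeZero m]

noncomputable def Q : (Fin m → F) →ₗ[F] AdjoinRoot (X ^ m - C 1 : F[X]) where
  toFun v := ∑ k : Fin m, v k • AdjoinRoot.root (X ^ m - C 1 : F[X]) ^ (k : ℕ)
  map_add' v w := by simp [add_smul, Finset.sum_add_distrib]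
  map_smul' a v := by simp [Finset.smul_sum, mul_smul]

lemma Q_apply (v : Fin m → F) :
    Q v = ∑ k : Fin m, v k • AdjoinRoot.root (X ^ m - C 1 : F[X]) ^ (k : ℕ) := rfl

lemma root_pow_m : (AdjoinRoot.root (X ^ m - C 1 : F[X])) ^ m = 1 := by
  have h := AdjoinRoot.mk_self (f := (X ^ m - C 1 : F[X]))
  rw [map_sub, map_pow, AdjoinRoot.mk_X, sub_eq_zero] at h
  simpa using h

lemma root_pow_mod (n : ℕ) :
    (AdjoinRoot.root (X ^ m - C 1 : F[X])) ^ (n % m) =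
      (AdjoinRoot.root (X ^ m - C 1 : F[X])) ^ n := by
  conv_rhs => rw [← Nat.mod_add_div n m]
  rw [pow_add, pow_mul, root_pow_m, one_pow, mul_one]

lemma Q_shift (v : Fin m → F) :
    Q (fun k => v (k - 1)) = AdjoinRoot.root (X ^ m - C 1 : F[X]) * Q v := by
  set t := AdjoinRoot.root (X ^ m - C 1 : F[X]) with ht
  have key := Fintype.sum_equiv (Equiv.addRight (1 : Fin m))
      (fun k : Fin m => v (k + 1 - 1) • t ^ ((k + 1 : Fin m) : ℕ))
      (fun k : Fin m => v (k - 1) • t ^ (k : ℕ)) (fun k => rfl)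
  rw [Q_apply, ← key, Q_apply, Finset.mul_sum]
  refine Finset.sum_congr rfl fun k _ => ?_
  have h2 : t ^ ((k + 1 : Fin m) : ℕ) = t ^ (k : ℕ) * t := by
    rw [Fin.val_add, Fin.val_one', ht, root_pow_mod, pow_add, root_pow_mod, pow_one]
  simp only [add_sub_cancel_right]
  rw [h2, mul_smul_comm, mul_comm (t ^ (k : ℕ)) t, ht]

noncomputable def shiftAct (p : F[X]) {M : Type*} [AddCommMonoid M] [Module F M]
    (v : Fin m → M) : Fin m → M :=
  ∑ n ∈ p.support, p.coeff n • fun k => v (k - (n : Fin m))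

lemma Q_shiftn (n : ℕ) (v : Fin m → F) :
    Q (fun k => v (k - (n : Fin m))) =
      (AdjoinRoot.root (X ^ m - C 1 : F[X])) ^ n * Q v := by
  induction n with
  | zero => simp
  | succ n ih =>
    have h : (fun k : Fin m => v (k - ((n + 1 : ℕ) : Fin m))) =
        fun k : Fin m => (fun k' : Fin m => v (k' - (n : Fin m))) (k - 1) := by
      funext k
      congr 1
      push_cast
      ring
    rw [h, Q_shift (fun k' : Fin m => v (k' - (n : Fin m))), ih, pow_succ]
    ring

lemma Q_shiftAct (p : F[X]) (v : Fin m → F) :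
    Q (shiftAct p v) = AdjoinRoot.mk _ p * Q v := by
  rw [shiftAct, map_sum]
  have hmk : AdjoinRoot.mk (X ^ m - C 1 : F[X]) p =
      ∑ n ∈ p.support, p.coeff n • (AdjoinRoot.root (X ^ m - C 1 : F[X])) ^ n := by
    conv_lhs => rw [← AdjoinRoot.aeval_eq, aeval_def, eval₂_eq_sum, Polynomial.sum_def]
    refine Finset.sum_congr rfl fun n _ => (Algebra.smul_def _ _).symm
  rw [hmk, Finset.sum_mul]
  refine Finset.sum_congr rfl fun n _ => ?_
  rw [map_smul, Q_shiftn, smul_mul_assoc]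

lemma mk_P (v : Fin m → F) :
    AdjoinRoot.mk (X ^ m - C 1 : F[X]) (∑ k : Fin m, C (v k) * X ^ (k : ℕ)) = Q v := by
  rw [map_sum, Q_apply]
  refine Finset.sum_congr rfl fun k _ => ?_
  rw [map_mul, AdjoinRoot.mk_C, map_pow, AdjoinRoot.mk_X, Algebra.smul_def,
    AdjoinRoot.algebraMap_eq]

lemma Q_inj (hm : 0 < m) : Function.Injective (Q (F := F) (m := m)) := by
  have hmon : (X ^ m - C 1 : F[X]).Monic := monic_X_pow_sub_C _ hm.ne'
  have hdeg : (X ^ m - C 1 : F[X]).natDegree = m := natDegree_X_pow_sub_C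
  have hli' := (AdjoinRoot.powerBasis' hmon).basis.linearIndependent
  rw [Fintype.linearIndependent_iff] at hli'
  have hli : ∀ g : Fin m → F,
      (∑ k : Fin m, g k • AdjoinRoot.root (X ^ m - C 1 : F[X]) ^ (k : ℕ)) = 0 →
      ∀ k, g k = 0 := by
    intro g hg k
    have hsum : ∑ i : Fin (X ^ m - C 1 : F[X]).natDegree,
        g (Fin.cast hdeg i) • (AdjoinRoot.powerBasis' hmon).basis i = 0 := by
      rw [Fintype.sum_equiv (finCongr hdeg)
        (fun i => g (Fin.cast hdeg i) • (AdjoinRoot.powerBasis' hmon).basis i)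
        (fun k : Fin m => g k • AdjoinRoot.root (X ^ m - C 1 : F[X]) ^ (k : ℕ))
        (fun i => by simp only [finCongr_apply]; rw [(AdjoinRoot.powerBasis' hmon).basis_eq_pow i, AdjoinRoot.powerBasis'_gen]; rfl)]
      exact hg
    have := hli' (fun i => g (Fin.cast hdeg i)) hsum (Fin.cast hdeg.symm k)
    exact (congrArg g (Fin.ext rfl)).trans this
  intro v w hvw
  have h0 : Q (v - w) = 0 := by rw [map_sub, hvw, sub_self]
  have := hli (v - w) (by rw [← Q_apply]; exact h0)
  funext k
  have hk := this k
  simpa [sub_eq_zero] using hk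

lemma shiftAct_mem {ℓ : ℕ} (D : Submodule F (Fin m → Fin ℓ → F))
    (hD : ∀ c ∈ D, (fun k j => c (k - 1) j) ∈ D) (p : F[X]) {c : Fin m → Fin ℓ → F}
    (hc : c ∈ D) : shiftAct p c ∈ D := by
  have hn : ∀ n : ℕ, (fun k => c (k - (n : Fin m))) ∈ D := by
    intro n
    induction n with
    | zero => simpa using hc
    | succ n ih =>
      have h2 := hD _ ih
      have heq : (fun (k : Fin m) (j : Fin ℓ) => c (k - 1 - (n : Fin m)) j) =
          fun k : Fin m => c (k - ((n + 1 : ℕ) : Fin m)) := by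
        funext k j
        have h3 : k - 1 - (n : Fin m) = k - ((n + 1 : ℕ) : Fin m) := by
          push_cast
          ring
        rw [h3]
      exact heq ▸ h2
  exact Submodule.sum_mem _ fun n _ => Submodule.smul_mem _ _ (hn n)

lemma shiftAct_col {ℓ : ℕ} (p : F[X]) (c : Fin m → Fin ℓ → F) (j : Fin ℓ) :
    (fun k => shiftAct p c k j) = shiftAct p (fun k => c k j) := by
  funext k
  simp [shiftAct, Finset.sum_apply]

end Stmt6Aux

theorem stmt6 (F : Type*) [Field F] [Fintype F] (m ℓ s : ℕ) (hm : 0 < m) [NeZero m]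
    (hℓ : 0 < ℓ) (hmq : (m : F) ≠ 0)
    -- factorization of x^m − 1 into distinct monic irreducible polynomials
    (f : Fin s → Polynomial F)
    (hirr : ∀ i, Irreducible (f i)) (hmonic : ∀ i, (f i).Monic)
    (hdist : ∀ i j, i ≠ j → f i ≠ f j)
    (hprod : ∏ i, f i = X ^ m - C 1)
    -- ψ_i : E_i → ⟨θ_i⟩ are the F-linear identifications of the fields E_i with the
    -- minimal cyclic codes with check polynomials f_i, intertwining multiplication
    -- by x with the cyclic shift
    (ψ : ∀ i, AdjoinRoot (f i) →ₗ[F] (Fin m → F))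
    (hinj : ∀ i, Function.Injective (ψ i))
    (hrange : ∀ i, (Set.range (ψ i)) = minimalCyclicCode F m (f i))
    (hshift : ∀ i (δ : AdjoinRoot (f i)) (k : Fin m),
      ψ i (AdjoinRoot.root (f i) * δ) k = ψ i δ (k - 1)) :
    -- (ii) any choice of outer codes C_i yields a QC code (a linear code invariant
    -- under the shift by ℓ, i.e. under the row shift)
    (∀ Cs : ∀ i, Submodule (AdjoinRoot (f i)) (Fin ℓ → AdjoinRoot (f i)),
      ∃ D : Submodule F (Fin m → Fin ℓ → F),
        (D : Set (Fin m → Fin ℓ → F)) = concatCode ψ Cs ∧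
        ∀ c ∈ D, (fun i j => c (i - 1) j) ∈ D) ∧
    -- (i) conversely, every QC code of length mℓ and index ℓ arises this way
    (∀ D : Submodule F (Fin m → Fin ℓ → F),
      (∀ c ∈ D, (fun (i : Fin m) (j : Fin ℓ) => c (i - 1) j) ∈ D) →
      ∃ Cs : ∀ i, Submodule (AdjoinRoot (f i)) (Fin ℓ → AdjoinRoot (f i)),
        (D : Set (Fin m → Fin ℓ → F)) = concatCode ψ Cs) := by
  classical
  constructor
  · -- (ii)
    intro Cs
    let Φ : (∀ i, Fin ℓ → AdjoinRoot (f i)) →ₗ[F] (Fin m → Fin ℓ → F) :=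
      { toFun := fun lam k j => ∑ i, ψ i (lam i j) k
        map_add' := fun x y => by
          funext k j
          simp [Finset.sum_add_distrib]
        map_smul' := fun r x => by
          funext k j
          simp [Finset.mul_sum] }
    refine ⟨Submodule.map Φ (Submodule.pi Set.univ fun i => (Cs i).restrictScalars F),
      ?_, ?_⟩
    · ext c
      simp only [SetLike.mem_coe, Submodule.mem_map, Submodule.mem_pi, Set.mem_univ,
        forall_true_left, Submodule.restrictScalars_mem, concatCode, Set.mem_setOf_eq]
      constructor
      · rintro ⟨lam, hlam, rfl⟩
        exact ⟨lam, hlam, fun k j => rfl⟩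
      · rintro ⟨lam, hlam, hc⟩
        exact ⟨lam, hlam, by funext k j; exact (hc k j).symm⟩
    · rintro c ⟨lam, hlam, rfl⟩
      refine ⟨fun i => AdjoinRoot.root (f i) • lam i,
        fun i _ => (Cs i).smul_mem _ (hlam i (Set.mem_univ i)), ?_⟩
      funext k j
      show ∑ i, ψ i ((AdjoinRoot.root (f i) • lam i) j) k = Φ lam (k - 1) j
      refine Finset.sum_congr rfl fun i _ => ?_
      rw [Pi.smul_apply, smul_eq_mul, hshift]
  · -- (i)
    intro D hD
    have hact : ∀ (p : F[X]) (c : Fin m → Fin ℓ → F), c ∈ D → Stmt6Aux.shiftAct p c ∈ D :=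
      fun p c hc => Stmt6Aux.shiftAct_mem D hD p hc
    have hcop : ∀ i j, i ≠ j → IsCoprime (f i) (f j) := by
      intro i j hij
      refine (hirr i).coprime_iff_not_dvd.mpr fun hdvd => hdist i j hij ?_
      exact eq_of_monic_of_associated (hmonic i) (hmonic j)
        ((hirr i).associated_of_dvd (hirr j) hdvd)
    set g : Fin s → F[X] := fun i => ∏ j ∈ Finset.univ.erase i, f j with hg
    have hfg : ∀ i, f i * g i = X ^ m - C 1 := fun i => by
      rw [hg, ← hprod]
      exact Finset.mul_prod_erase _ _ (Finset.mem_univ i)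
    have hcopg : ∀ i, IsCoprime (f i) (g i) := fun i =>
      IsCoprime.prod_right fun j hj => hcop i j fun h => (Finset.mem_erase.mp hj).1 h.symm
    choose a b hab using fun i => hcopg i
    set e : Fin s → F[X] := fun i => b i * g i with he
    have hef : ∀ i, AdjoinRoot.mk (X ^ m - C 1 : F[X]) (e i) *
        AdjoinRoot.mk (X ^ m - C 1 : F[X]) (f i) = 0 := fun i => by
      rw [← map_mul]
      have h1 : e i * f i = b i * (X ^ m - C 1) := by
        show b i * g i * f i = b i * (X ^ m - C 1)
        rw [← hfg i]
        ring
      rw [h1, map_mul, AdjoinRoot.mk_self, mul_zero]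
    have hesum : AdjoinRoot.mk (X ^ m - C 1 : F[X]) (∑ i, e i) = 1 := by
      have hdvd : (X ^ m - C 1 : F[X]) ∣ (∑ i, e i) - 1 := by
        rw [← hprod]
        refine Finset.prod_dvd_of_coprime (fun i _ j hj hij => hcop i j hij) fun j _ => ?_
        have h1 : (∑ i, e i) - 1 = (e j - 1) + ∑ i ∈ Finset.univ.erase j, e i := by
          rw [← Finset.add_sum_erase _ _ (Finset.mem_univ j)]
          ring
        rw [h1]
        refine dvd_add ?_ (Finset.dvd_sum fun i hi => ?_)
        · have h2 : e j - 1 = -(a j * f j) := by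
            have h3 := hab j
            show b j * g j - 1 = -(a j * f j)
            linear_combination h3
          rw [h2]
          exact dvd_neg.mpr (dvd_mul_left (f j) (a j))
        · have h4 : f j ∣ g i := by
            rw [hg]
            exact Finset.dvd_prod_of_mem f
              (Finset.mem_erase.mpr ⟨fun h => (Finset.mem_erase.mp hi).1 h.symm, Finset.mem_univ j⟩)
          exact Dvd.dvd.mul_left h4 (b i)
      have h0 : AdjoinRoot.mk (X ^ m - C 1 : F[X]) ((∑ i, e i) - 1) = 0 :=
        AdjoinRoot.mk_eq_zero.mpr hdvd
      rw [map_sub, map_one, sub_eq_zero] at h0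
      exact h0
    have key : ∀ i (δ : AdjoinRoot (f i)), ∀ v : Fin ℓ → AdjoinRoot (f i),
        (fun (k : Fin m) (j : Fin ℓ) => ψ i (v j) k) ∈ D →
        (fun (k : Fin m) (j : Fin ℓ) => ψ i (δ * v j) k) ∈ D := by
      intro i δ
      have hδ : δ ∈ Algebra.adjoin F ({AdjoinRoot.root (f i)} : Set (AdjoinRoot (f i))) := by
        rw [AdjoinRoot.adjoinRoot_eq_top]
        trivial
      induction hδ using Algebra.adjoin_induction with
      | mem x hx =>
        intro v hv
        rw [Set.mem_singleton_iff] at hx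
        subst hx
        have h2 := hD _ hv
        have heq : (fun (k : Fin m) (j : Fin ℓ) => (fun (k : Fin m) (j : Fin ℓ) => ψ i (v j) k) (k - 1) j)
            = fun (k : Fin m) (j : Fin ℓ) => ψ i (AdjoinRoot.root (f i) * v j) k := by
          funext k j
          exact (hshift i (v j) k).symm
        exact heq ▸ h2
      | algebraMap r =>
        intro v hv
        have heq : (fun (k : Fin m) (j : Fin ℓ) => ψ i ((algebraMap F (AdjoinRoot (f i)) r) * v j) k)
            = r • fun (k : Fin m) (j : Fin ℓ) => ψ i (v j) k := by
          funext k j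
          rw [← Algebra.smul_def, map_smul]
          rfl
        exact heq ▸ D.smul_mem r hv
      | add x y hx hy ihx ihy =>
        intro v hv
        have heq : (fun (k : Fin m) (j : Fin ℓ) => ψ i ((x + y) * v j) k)
            = (fun (k : Fin m) (j : Fin ℓ) => ψ i (x * v j) k)
              + fun (k : Fin m) (j : Fin ℓ) => ψ i (y * v j) k := by
          funext k j
          rw [add_mul, map_add]
          rfl
        exact heq ▸ D.add_mem (ihx v hv) (ihy v hv)
      | mul x y hx hy ihx ihy =>
        intro v hv
        have heq : (fun (k : Fin m) (j : Fin ℓ) => ψ i ((x * y) * v j) k)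
            = fun (k : Fin m) (j : Fin ℓ) => ψ i (x * ((fun j' => y * v j') j)) k := by
          funext k j
          rw [mul_assoc]
        exact heq ▸ ihx _ (ihy v hv)
    let Cs : ∀ i, Submodule (AdjoinRoot (f i)) (Fin ℓ → AdjoinRoot (f i)) := fun i =>
      { carrier := {v | (fun (k : Fin m) (j : Fin ℓ) => ψ i (v j) k) ∈ D}
        add_mem' := by
          intro v w hv hw
          show (fun (k : Fin m) (j : Fin ℓ) => ψ i ((v + w) j) k) ∈ D
          have heq : (fun (k : Fin m) (j : Fin ℓ) => ψ i ((v + w) j) k)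
              = (fun (k : Fin m) (j : Fin ℓ) => ψ i (v j) k)
                + fun (k : Fin m) (j : Fin ℓ) => ψ i (w j) k := by
            funext k j
            rw [Pi.add_apply, map_add]
            rfl
          exact heq ▸ D.add_mem hv hw
        zero_mem' := by
          show (fun (k : Fin m) (j : Fin ℓ) => ψ i ((0 : Fin ℓ → AdjoinRoot (f i)) j) k) ∈ D
          have heq : (fun (k : Fin m) (j : Fin ℓ) => ψ i ((0 : Fin ℓ → AdjoinRoot (f i)) j) k)
              = (0 : Fin m → Fin ℓ → F) := by
            funext k j
            rw [Pi.zero_apply, map_zero]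
            rfl
          exact heq ▸ D.zero_mem
        smul_mem' := by
          intro δ v hv
          show (fun (k : Fin m) (j : Fin ℓ) => ψ i ((δ • v) j) k) ∈ D
          exact key i δ v hv }
    refine ⟨Cs, ?_⟩
    ext c
    simp only [SetLike.mem_coe, concatCode, Set.mem_setOf_eq]
    constructor
    · intro hc
      have hcols : ∀ i j, ∃ δ : AdjoinRoot (f i),
          ψ i δ = fun k => Stmt6Aux.shiftAct (e i) c k j := by
        intro i j
        set w : Fin m → F := fun k => Stmt6Aux.shiftAct (e i) c k j with hw
        have hmem : w ∈ Set.range (ψ i) := by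
          rw [hrange i]
          simp only [minimalCyclicCode, Set.mem_setOf_eq]
          refine AdjoinRoot.mk_eq_zero.mp ?_
          rw [map_mul, Stmt6Aux.mk_P, hw, Stmt6Aux.shiftAct_col, Stmt6Aux.Q_shiftAct,
            mul_right_comm, hef i, zero_mul]
        exact hmem
      choose lam hlam using hcols
      have hQcol : ∀ j : Fin ℓ, Stmt6Aux.Q (fun k => ∑ i, Stmt6Aux.shiftAct (e i) c k j)
          = Stmt6Aux.Q (fun k => c k j) := by
        intro j
        have h1 : (fun k => ∑ i, Stmt6Aux.shiftAct (e i) c k j)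
            = ∑ i, (fun k => Stmt6Aux.shiftAct (e i) c k j) := by
          funext k
          rw [Finset.sum_apply]
        rw [h1, map_sum]
        have h2 : ∀ i, Stmt6Aux.Q (fun k => Stmt6Aux.shiftAct (e i) c k j)
            = AdjoinRoot.mk (X ^ m - C 1 : F[X]) (e i) * Stmt6Aux.Q (fun k => c k j) := fun i => by
          rw [Stmt6Aux.shiftAct_col, Stmt6Aux.Q_shiftAct]
        rw [Finset.sum_congr rfl fun i _ => h2 i, ← Finset.sum_mul, ← map_sum, hesum, one_mul]
      have hcol : ∀ j : Fin ℓ, (fun k => ∑ i, Stmt6Aux.shiftAct (e i) c k j)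
          = fun k => c k j := fun j => Stmt6Aux.Q_inj hm (hQcol j)
      refine ⟨lam, ?_, ?_⟩
      · intro i
        show (fun (k : Fin m) (j : Fin ℓ) => ψ i (lam i j) k) ∈ D
        have heq : (fun (k : Fin m) (j : Fin ℓ) => ψ i (lam i j) k)
            = Stmt6Aux.shiftAct (e i) c := by
          funext k j
          exact congrFun (hlam i j) k
        rw [heq]
        exact hact (e i) c hc
      · intro k j
        have h5 : ∑ i, ψ i (lam i j) k = ∑ i, Stmt6Aux.shiftAct (e i) c k j :=
          Finset.sum_congr rfl fun i _ => congrFun (hlam i j) k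
        rw [h5]
        exact (congrFun (hcol j) k).symm
    · rintro ⟨lam, hlam, hc⟩
      have hceq : c = ∑ i, (fun (k : Fin m) (j : Fin ℓ) => ψ i (lam i j) k) := by
        funext k j
        rw [hc k j]
        simp [Finset.sum_apply]
      rw [hceq]
      exact Submodule.sum_mem D fun i _ => hlam i
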